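/- For any W ∈ ℝ^{n×r} of rank r with r ≤ n, the rank of the linear map V ↦ VW^T + WV^T from ℝ^{n×r} to symmetric n×n matrices equals nr − r(r−1)/2, and its kernel is exactly {WA : A ∈ ℝ^{r×r}, A^T = −A}, which has dimension r(r−1)/2. -/

import Mathlib

open Matrix

-- card of strictly-increasing pairs
def ltPairsEquiv (r : ℕ) : {p : Fin r × Fin r // p.1 < p.2} ≃ Σ j : Fin r, Fin j.val where
  toFun p := ⟨p.1.2, ⟨p.1.1.val, p.2⟩⟩
  invFun s := ⟨(⟨s.2.val, s.2.isLt.trans s.1.isLt⟩, s.1), s.2.isLt⟩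
  left_inv p := by rcases p with ⟨⟨a, b⟩, h⟩; rfl
  right_inv s := by rcases s with ⟨j, i⟩; rfl

lemma card_ltPairs (r : ℕ) :
    Fintype.card {p : Fin r × Fin r // p.1 < p.2} = r * (r - 1) / 2 := by
  rw [Fintype.card_congr (ltPairsEquiv r), Fintype.card_sigma]
  simp only [Fintype.card_fin]
  rw [Fin.sum_univ_eq_sum_range (fun i => i) r, Finset.sum_range_id]

-- the skew submodule
def skw (r : ℕ) : Submodule ℝ (Matrix (Fin r) (Fin r) ℝ) where
  carrier := {A | Aᵀ = -A}
  add_mem' := by intro a b ha hb; simp_all [Set.mem_setOf_eq, transpose_add]; abel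
  zero_mem' := by simp
  smul_mem' := by intro c a ha; simp_all [Set.mem_setOf_eq, transpose_smul]

noncomputable def skwEquiv (r : ℕ) : skw r ≃ₗ[ℝ] ({p : Fin r × Fin r // p.1 < p.2} → ℝ) := by
  refine LinearEquiv.ofBijective
    { toFun := fun A p => A.1 p.1.1 p.1.2
      map_add' := fun a b => rfl
      map_smul' := fun c a => rfl } ⟨?_, ?_⟩
  · intro A B h
    ext i j
    have hA := A.2; have hB := B.2
    have hA' : ∀ i j, A.1 j i = -A.1 i j := fun i j => congrFun (congrFun hA i) j
    have hB' : ∀ i j, B.1 j i = -B.1 i j := fun i j => congrFun (congrFun hB i) j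
    rcases lt_trichotomy i j with hij | hij | hij
    · exact congrFun h ⟨(i, j), hij⟩
    · subst hij
      have ha := hA' i i; have hb := hB' i i
      rw [eq_neg_iff_add_eq_zero] at ha hb
      linarith
    · rw [hA' j i, hB' j i]
      exact congrArg Neg.neg (congrFun h ⟨(j, i), hij⟩)
  · intro f
    refine ⟨⟨fun i j => if h : i < j then f ⟨(i, j), h⟩ else
        if h : j < i then -f ⟨(j, i), h⟩ else 0, ?_⟩, ?_⟩
    · ext i j
      show (if h : j < i then f ⟨(j, i), h⟩ else if h : i < j then -f ⟨(i, j), h⟩ else 0) = -(if h : i < j then f ⟨(i, j), h⟩ else if h : j < i then -f ⟨(j, i), h⟩ else 0)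
      rcases lt_trichotomy i j with h | h | h
      · rw [dif_neg (asymm h), dif_pos h, dif_pos h]
      · subst h; simp [lt_irrefl]
      · rw [dif_pos h, dif_neg (asymm h), dif_pos h, neg_neg]
    · ext p
      exact dif_pos p.2

lemma finrank_skw (r : ℕ) : Module.finrank ℝ (skw r) = r * (r - 1) / 2 := by
  rw [LinearEquiv.finrank_eq (skwEquiv r), Module.finrank_pi, card_ltPairs]

/-- The differential of `φ(W) = W * Wᵀ` at `W`: the linear map
`V ↦ V * Wᵀ + W * Vᵀ`. -/
def dphi (n r : ℕ) (W : Matrix (Fin n) (Fin r) ℝ) :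
    Matrix (Fin n) (Fin r) ℝ →ₗ[ℝ] Matrix (Fin n) (Fin n) ℝ where
  toFun V := V * Wᵀ + W * Vᵀ
  map_add' x y := by
    simp only [Matrix.add_mul, Matrix.mul_add, Matrix.transpose_add]
    abel
  map_smul' c x := by
    simp only [Matrix.smul_mul, Matrix.mul_smul, Matrix.transpose_smul,
      smul_add, RingHom.id_apply]

def lmulW {n r : ℕ} (W : Matrix (Fin n) (Fin r) ℝ) :
    Matrix (Fin r) (Fin r) ℝ →ₗ[ℝ] Matrix (Fin n) (Fin r) ℝ where
  toFun A := W * A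
  map_add' a b := by simp [Matrix.mul_add]
  map_smul' c a := by simp [Matrix.mul_smul]

theorem dphi_rank_and_kernel {n r : ℕ} (hrn : r ≤ n)
    (W : Matrix (Fin n) (Fin r) ℝ) (hW : W.rank = r) :
    Module.finrank ℝ (LinearMap.range (dphi n r W)) = n * r - r * (r - 1) / 2 ∧
      (LinearMap.ker (dphi n r W) : Set (Matrix (Fin n) (Fin r) ℝ)) =
        {V | ∃ A : Matrix (Fin r) (Fin r) ℝ, Aᵀ = -A ∧ V = W * A} ∧
      Module.finrank ℝ (LinearMap.ker (dphi n r W)) = r * (r - 1) / 2 := by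
  set G := Wᵀ * W with hGdef
  have hGrank : G.rank = r := by rw [hGdef, Matrix.rank_transpose_mul_self]; exact hW
  have hGu : IsUnit G := by
    rw [← Matrix.mulVec_surjective_iff_isUnit]
    have htop : LinearMap.range G.mulVecLin = ⊤ := by
      apply Submodule.eq_top_of_finrank_eq
      rw [Module.finrank_fin_fun]
      exact hGrank
    intro v
    obtain ⟨x, hx⟩ := LinearMap.range_eq_top.mp htop v
    exact ⟨x, hx⟩
  have hGd : IsUnit G.det := (Matrix.isUnit_iff_isUnit_det G).mp hGu
  have hGi : G * G⁻¹ = 1 := Matrix.mul_nonsing_inv G hGd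
  have hGi' : G⁻¹ * G = 1 := Matrix.nonsing_inv_mul G hGd
  have hGsymm : Gᵀ = G := by rw [hGdef, Matrix.transpose_mul, Matrix.transpose_transpose]
  have hGisymm : (G⁻¹)ᵀ = G⁻¹ := by rw [Matrix.transpose_nonsing_inv, hGsymm]
  have hWinj : Function.Injective (lmulW W) := by
    intro A B h
    have h2 : G * A = G * B := by
      simp only [lmulW, LinearMap.coe_mk, AddHom.coe_mk] at h
      rw [hGdef, Matrix.mul_assoc, Matrix.mul_assoc, h]
    calc A = G⁻¹ * (G * A) := by rw [← Matrix.mul_assoc, hGi', Matrix.one_mul]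
      _ = G⁻¹ * (G * B) := by rw [h2]
      _ = B := by rw [← Matrix.mul_assoc, hGi', Matrix.one_mul]
  have hker : (LinearMap.ker (dphi n r W) : Set (Matrix (Fin n) (Fin r) ℝ)) =
      {V | ∃ A : Matrix (Fin r) (Fin r) ℝ, Aᵀ = -A ∧ V = W * A} := by
    ext V
    simp only [SetLike.mem_coe, LinearMap.mem_ker, Set.mem_setOf_eq]
    constructor
    · intro h
      have h0 : V * Wᵀ + W * Vᵀ = 0 := h
      have h1 : V * G + W * (Vᵀ * W) = 0 := by
        have := congrArg (· * W) h0
        simpa [Matrix.add_mul, Matrix.mul_assoc, hGdef] using this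
      have hWVW : W * (Vᵀ * W) = -(V * G) := by
        rw [add_comm] at h1
        exact eq_neg_of_add_eq_zero_left h1
      have hVeq : V = W * (-(Vᵀ * W * G⁻¹)) := by
        rw [Matrix.mul_neg, ← Matrix.mul_assoc, ← Matrix.mul_assoc, Matrix.mul_assoc W Vᵀ W,
          hWVW, Matrix.neg_mul, neg_neg, Matrix.mul_assoc, hGi, Matrix.mul_one]
      refine ⟨-(Vᵀ * W * G⁻¹), ?_, hVeq⟩
      have hWTV : Wᵀ * V = G * (-(Vᵀ * W * G⁻¹)) := by
        conv_lhs => rw [hVeq, ← Matrix.mul_assoc]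
      rw [Matrix.transpose_neg, Matrix.transpose_mul, Matrix.transpose_mul,
        Matrix.transpose_transpose, hGisymm, Matrix.mul_assoc, hWTV, ← Matrix.mul_assoc,
        hGi', Matrix.one_mul, Matrix.mul_assoc]
    · rintro ⟨A, hA, rfl⟩
      show W * A * Wᵀ + W * (W * A)ᵀ = 0
      rw [Matrix.transpose_mul, hA, Matrix.neg_mul, Matrix.mul_neg, Matrix.mul_assoc]
      exact add_neg_cancel _
  have hkermap : LinearMap.ker (dphi n r W) = Submodule.map (lmulW W) (skw r) := by
    ext V
    have := Set.ext_iff.mp hker V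
    simp only [SetLike.mem_coe] at this
    rw [this, Submodule.mem_map]
    constructor
    · rintro ⟨A, hA, rfl⟩; exact ⟨A, hA, rfl⟩
    · rintro ⟨A, hA, rfl⟩; exact ⟨A, hA, rfl⟩
  have hkerrank : Module.finrank ℝ (LinearMap.ker (dphi n r W)) = r * (r - 1) / 2 := by
    rw [hkermap, ← LinearEquiv.finrank_eq (Submodule.equivMapOfInjective (lmulW W) hWinj (skw r)),
      finrank_skw]
  refine ⟨?_, hker, hkerrank⟩
  have hrn2 := LinearMap.finrank_range_add_finrank_ker (dphi n r W)
  rw [hkerrank, Module.finrank_matrix, Fintype.card_fin, Fintype.card_fin, Module.finrank_self] at hrn2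
  omega
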